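/- Let a, b ∈ ℂ \ {0} with |b| ≤ |a|, let c ∈ ℂ satisfy c² = 4ab, and let K ⊂ ℂ be compact. Then there exists a constant C = C(a, b, K) > 0 such that for every z ∈ K, the two roots ζ_+, ζ_- of a ζ² − z ζ + b = 0 satisfy |ζ_+ − ζ_-| ≥ C⁻¹ (|z − c| + |z + c| − 2|c|)^{1/2}. -/

import Mathlib

noncomputable section

/-- For `z` in a compact set `K`, the two roots `ζ₊, ζ₋` of `a ζ² − z ζ + b = 0`
satisfy `|ζ₊ − ζ₋| ≥ C⁻¹ (|z − c| + |z + c| − 2|c|)^{1/2}`, where `±c`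
(`c² = 4ab`) are the focal points. -/
theorem roots_separation_lower_bound (a b : ℂ) (ha : a ≠ 0) (hb : b ≠ 0)
    (hba : ‖b‖ ≤ ‖a‖)
    (c : ℂ) (hc : c ^ 2 = 4 * a * b) (K : Set ℂ) (hK : IsCompact K) :
    ∃ C > 0, ∀ z ∈ K, ∀ ζp ζm : ℂ,
      (∀ ζ : ℂ, a * ζ ^ 2 - z * ζ + b = a * (ζ - ζp) * (ζ - ζm)) →
      ‖ζp - ζm‖ ≥
        C⁻¹ * Real.sqrt (‖z - c‖ + ‖z + c‖
          - 2 * ‖c‖) := by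
  have hc0 : c ≠ 0 := by
    intro h
    rw [h] at hc
    simp [ha, hb] at hc
  have hca : (0:ℝ) < ‖c‖ := norm_pos_iff.mpr hc0
  have haa : (0:ℝ) < ‖a‖ := norm_pos_iff.mpr ha
  refine ⟨‖a‖ / Real.sqrt (‖c‖), by positivity, ?_⟩
  intro z hz ζp ζm hroot
  have h0 := hroot 0
  have h1 := hroot 1
  have h2 := hroot (-1)
  have hprod : b = a * ζp * ζm := by linear_combination h0
  have hsum : z = a * (ζp + ζm) := by linear_combination (-1/2 : ℂ) * h1 + (1/2 : ℂ) * h2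
  have key : a ^ 2 * (ζp - ζm) ^ 2 = (z - c) * (z + c) := by
    linear_combination (-(z + a * (ζp + ζm))) * hsum + 4 * a * hprod + hc
  set r1 := ‖z - c‖ with hr1
  set r2 := ‖z + c‖ with hr2
  set cc := ‖c‖ with hcc
  have habs : (‖a‖ * ‖ζp - ζm‖) ^ 2 = r1 * r2 := by
    have := congrArg (fun w : ℂ => ‖w‖) key
    simpa [norm_mul, norm_pow, mul_pow] using this
  have tri : 2 * cc ≤ r1 + r2 := by
    have h := norm_sub_le (z - c) (z + c)
    rw [show (z - c) - (z + c) = -(2 * c) by ring] at h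
    simpa using h
  have para : r1 ^ 2 + r2 ^ 2 = 2 * ‖z‖ ^ 2 + 2 * cc ^ 2 := by
    rw [hr1, hr2, hcc, Complex.sq_norm, Complex.sq_norm, Complex.sq_norm, Complex.sq_norm]
    simp [Complex.normSq_apply, Complex.sub_re, Complex.sub_im, Complex.add_re,
      Complex.add_im]
    ring
  have zbound : ‖z‖ ^ 2 ≤ r1 * r2 + cc ^ 2 := by
    have h : ‖z ^ 2‖ ≤ ‖z ^ 2 - c ^ 2‖ + ‖c ^ 2‖ := by
      calc ‖z ^ 2‖ = ‖(z ^ 2 - c ^ 2) + c ^ 2‖ := by ring_nf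
        _ ≤ _ := norm_add_le _ _
    have h2 : ‖z ^ 2 - c ^ 2‖ = r1 * r2 := by
      rw [show z ^ 2 - c ^ 2 = (z - c) * (z + c) by ring, norm_mul]
    rw [norm_pow, norm_pow, h2] at h
    linarith
  have hX : 0 ≤ r1 + r2 - 2 * cc := by linarith
  have hineq : cc * (r1 + r2 - 2 * cc) ≤ r1 * r2 := by
    nlinarith [mul_nonneg hX (show (0:ℝ) ≤ r1 + r2 + 2 * cc by positivity), hca.le]
  rw [ge_iff_le, inv_div, div_mul_eq_mul_div, div_le_iff₀ haa, ← Real.sqrt_mul hca.le]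
  calc Real.sqrt (cc * (r1 + r2 - 2 * cc)) ≤ Real.sqrt (r1 * r2) :=
        Real.sqrt_le_sqrt hineq
    _ = ‖a‖ * ‖ζp - ζm‖ := by
        rw [← habs]; exact Real.sqrt_sq (by positivity)
    _ = ‖ζp - ζm‖ * ‖a‖ := mul_comm _ _
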